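/- Let P(λ) = [[A(λ), B(λ)], [-C(λ), D(λ)]] be a polynomial system matrix with transfer function G(λ). Suppose A(λ) and C(λ) are right coprime and A(λ)^{-1}B(λ) is proper. If H_2(λ) is a right minimal basis of G(λ) and H_1(λ) := -A(λ)^{-1}B(λ)H_2(λ), then [H_1(λ); H_2(λ)] is a right minimal basis of P(λ), and the right minimal indices of P(λ) and G(λ) are the same. -/

import Mathlib

open Polynomial Matrix

noncomputable section

variable {F : Type*} [Field F]

/-- The natural embedding of a polynomial matrix into the rational functions. -/
def toRF {a b : Type*} (M : Matrix a b (Polynomial F)) : Matrix a b (RatFunc F) :=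
  M.map (algebraMap (Polynomial F) (RatFunc F))

/-- A rational function is proper if the degree of its numerator is at most that of its
denominator. -/
def IsProperRat (r : RatFunc F) : Prop := r.num.degree ≤ r.denom.degree

/-- Degree (as a natural number) of the `j`-th column of a polynomial matrix. -/
def colDegNat {a : Type*} [Fintype a] {l : ℕ} (N : Matrix a (Fin l) (Polynomial F))
    (j : Fin l) : ℕ :=
  Finset.univ.sup fun i => (N i j).natDegree

/-- The order of a polynomial matrix: the sum of its column degrees. -/
def matOrder {a : Type*} [Fintype a] {l : ℕ} (N : Matrix a (Fin l) (Polynomial F)) : ℕ :=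
  ∑ j, colDegNat N j

/-- The multiset of column degrees of a polynomial matrix. -/
def colDegs {a : Type*} [Fintype a] {l : ℕ} (N : Matrix a (Fin l) (Polynomial F)) : Multiset ℕ :=
  Finset.univ.val.map fun j => colDegNat N j

/-- The columns of the polynomial matrix `N`, regarded as rational vectors, form a basis of
the right null-space of the rational matrix `M`. -/
def IsRightPolyBasis {a b : Type*} [Fintype a] [Fintype b] {l : ℕ}
    (M : Matrix a b (RatFunc F)) (N : Matrix b (Fin l) (Polynomial F)) : Prop :=
  LinearIndependent (RatFunc F) (fun j : Fin l => (toRF N)ᵀ j) ∧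
    Submodule.span (RatFunc F) (Set.range fun j : Fin l => (toRF N)ᵀ j) =
      LinearMap.ker M.mulVecLin

/-- The columns of the polynomial matrix `N` form a basis of the left null-space of `M`. -/
def IsLeftPolyBasis {a b : Type*} [Fintype a] [Fintype b] {l : ℕ}
    (M : Matrix a b (RatFunc F)) (N : Matrix a (Fin l) (Polynomial F)) : Prop :=
  LinearIndependent (RatFunc F) (fun j : Fin l => (toRF N)ᵀ j) ∧
    Submodule.span (RatFunc F) (Set.range fun j : Fin l => (toRF N)ᵀ j) =
      LinearMap.ker M.vecMulLinear

/-- A right minimal basis: a right polynomial basis of least order. -/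
def IsRightMinimalBasis {a b : Type*} [Fintype a] [Fintype b] {l : ℕ}
    (M : Matrix a b (RatFunc F)) (N : Matrix b (Fin l) (Polynomial F)) : Prop :=
  IsRightPolyBasis M N ∧
    ∀ (l' : ℕ) (N' : Matrix b (Fin l') (Polynomial F)), IsRightPolyBasis M N' →
      matOrder N ≤ matOrder N'

/-- A left minimal basis: a left polynomial basis of least order. -/
def IsLeftMinimalBasis {a b : Type*} [Fintype a] [Fintype b] {l : ℕ}
    (M : Matrix a b (RatFunc F)) (N : Matrix a (Fin l) (Polynomial F)) : Prop :=
  IsLeftPolyBasis M N ∧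
    ∀ (l' : ℕ) (N' : Matrix a (Fin l') (Polynomial F)), IsLeftPolyBasis M N' →
      matOrder N ≤ matOrder N'

/-- `s` is the multiset of right minimal indices of `M`. -/
def HasRightMinimalIndices {a b : Type*} [Fintype a] [Fintype b]
    (M : Matrix a b (RatFunc F)) (s : Multiset ℕ) : Prop :=
  ∃ (l : ℕ) (N : Matrix b (Fin l) (Polynomial F)), IsRightMinimalBasis M N ∧ colDegs N = s

/-- `s` is the multiset of left minimal indices of `M`. -/
def HasLeftMinimalIndices {a b : Type*} [Fintype a] [Fintype b]
    (M : Matrix a b (RatFunc F)) (s : Multiset ℕ) : Prop :=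
  ∃ (l : ℕ) (N : Matrix a (Fin l) (Polynomial F)), IsLeftMinimalBasis M N ∧ colDegs N = s

lemma toRF_mul {a b c : Type*} [Fintype b] (M : Matrix a b (Polynomial F))
    (N : Matrix b c (Polynomial F)) : toRF (M * N) = toRF M * toRF N :=
  Matrix.map_mul

lemma toRF_add {a b : Type*} (M N : Matrix a b (Polynomial F)) :
    toRF (M + N) = toRF M + toRF N := Matrix.map_add _ (map_add _) _ _

lemma toRF_neg {a b : Type*} (M : Matrix a b (Polynomial F)) :
    toRF (-M) = -toRF M := by
  ext i j; simp [toRF]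

lemma toRF_sub {a b : Type*} (M N : Matrix a b (Polynomial F)) :
    toRF (M - N) = toRF M - toRF N := by
  ext i j; simp [toRF]

lemma toRF_one {a : Type*} [DecidableEq a] : toRF (1 : Matrix a a (Polynomial F)) = 1 :=
  Matrix.map_one _ (map_zero _) (map_one _)

lemma toRF_fromBlocks {a b c d : Type*} (A : Matrix a b (Polynomial F))
    (B : Matrix a c (Polynomial F)) (C : Matrix d b (Polynomial F))
    (D : Matrix d c (Polynomial F)) :
    toRF (fromBlocks A B C D) = fromBlocks (toRF A) (toRF B) (toRF C) (toRF D) := by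
  ext (i|i) (j|j) <;> rfl

lemma toRF_fromRows {a b c : Type*} (A : Matrix a c (Polynomial F))
    (B : Matrix b c (Polynomial F)) :
    toRF (fromRows A B) = fromRows (toRF A) (toRF B) := by
  ext (i|i) j <;> rfl

lemma toRF_inj {a b : Type*} {M N : Matrix a b (Polynomial F)} (h : toRF M = toRF N) :
    M = N := by
  funext i j
  exact IsFractionRing.injective (Polynomial F) (RatFunc F) (congrFun (congrFun h i) j)

lemma col_mul {a b : Type*} [Fintype b] {l : ℕ} (M : Matrix a b (RatFunc F))
    (N : Matrix b (Fin l) (RatFunc F)) (j : Fin l) :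
    (M * N)ᵀ j = M.mulVec (Nᵀ j) := by
  funext i; simp [Matrix.mul_apply, Matrix.mulVec, dotProduct]

lemma intDegree_sum_le {ι : Type*} {s : Finset ι} {f : ι → RatFunc F} {d : ℤ} (hd : 0 ≤ d)
    (h : ∀ i ∈ s, (f i).intDegree ≤ d) : (∑ i ∈ s, f i).intDegree ≤ d := by
  classical
  induction s using Finset.cons_induction with
  | empty => simpa using hd
  | cons a s ha ih =>
    rw [Finset.sum_cons]
    have hfa := h a (Finset.mem_cons_self a s)
    have hrest : (∑ i ∈ s, f i).intDegree ≤ d := ih fun i hi => h i (Finset.mem_cons_of_mem hi)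
    by_cases h0 : f a + ∑ i ∈ s, f i = 0
    · rw [h0, RatFunc.intDegree_zero]; exact hd
    by_cases h1 : (∑ i ∈ s, f i) = 0
    · rw [h1, add_zero]; exact hfa
    calc (f a + ∑ i ∈ s, f i).intDegree ≤ max (f a).intDegree (∑ i ∈ s, f i).intDegree :=
        RatFunc.intDegree_add_le h1 h0
      _ ≤ d := max_le hfa hrest

lemma IsProperRat.intDegree_nonpos {r : RatFunc F} (h : IsProperRat r) : r.intDegree ≤ 0 := by
  have h2 := Polynomial.natDegree_le_natDegree h
  exact sub_nonpos.mpr (by exact_mod_cast h2)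

lemma colDeg_le_of_proper {n m l : ℕ} (R : Matrix (Fin n) (Fin m) (RatFunc F))
    (hR : ∀ i j, IsProperRat (R i j)) (M₁ : Matrix (Fin n) (Fin l) (Polynomial F))
    (M₂ : Matrix (Fin m) (Fin l) (Polynomial F)) (h : toRF M₁ = -(R * toRF M₂)) (j : Fin l) :
    colDegNat M₁ j ≤ colDegNat M₂ j := by
  apply Finset.sup_le
  intro i _
  have he : algebraMap (Polynomial F) (RatFunc F) (M₁ i j) =
      -(∑ k, R i k * algebraMap (Polynomial F) (RatFunc F) (M₂ k j)) := by
    have h3 := congrFun (congrFun h i) j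
    simpa [toRF, Matrix.mul_apply] using h3
  have hd0 : (0:ℤ) ≤ (colDegNat M₂ j : ℤ) := Int.ofNat_nonneg _
  have hsum : (∑ k, R i k * algebraMap (Polynomial F) (RatFunc F) (M₂ k j)).intDegree
      ≤ (colDegNat M₂ j : ℤ) := by
    apply intDegree_sum_le hd0
    intro k _
    by_cases h1 : R i k = 0
    · simpa [h1, RatFunc.intDegree_zero] using hd0
    by_cases h2 : M₂ k j = 0
    · simpa [h2, RatFunc.intDegree_zero] using hd0
    have h2' : algebraMap (Polynomial F) (RatFunc F) (M₂ k j) ≠ 0 :=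
      fun hc => h2 (IsFractionRing.injective (Polynomial F) (RatFunc F)
        (by rw [hc, map_zero]))
    rw [RatFunc.intDegree_mul h1 h2', RatFunc.intDegree_polynomial]
    have hle : (M₂ k j).natDegree ≤ colDegNat M₂ j :=
      Finset.le_sup (f := fun k => (M₂ k j).natDegree) (Finset.mem_univ k)
    have hp := (hR i k).intDegree_nonpos
    omega
  by_cases h0 : M₁ i j = 0
  · simp [h0]
  have hfin : (algebraMap (Polynomial F) (RatFunc F) (M₁ i j)).intDegree
      ≤ (colDegNat M₂ j : ℤ) := by
    rw [he, RatFunc.intDegree_neg]; exact hsum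
  rw [RatFunc.intDegree_polynomial] at hfin
  exact_mod_cast hfin

lemma colDegNat_fromRows {a b : Type*} [Fintype a] [Fintype b] {l : ℕ}
    (M₁ : Matrix a (Fin l) (Polynomial F)) (M₂ : Matrix b (Fin l) (Polynomial F)) (j : Fin l) :
    colDegNat (fromRows M₁ M₂) j = max (colDegNat M₁ j) (colDegNat M₂ j) := by
  unfold colDegNat
  apply le_antisymm
  · apply Finset.sup_le
    rintro (i|i) _
    · exact le_max_of_le_left (Finset.le_sup (f := fun i => (M₁ i j).natDegree)
        (Finset.mem_univ i))
    · exact le_max_of_le_right (Finset.le_sup (f := fun i => (M₂ i j).natDegree)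
        (Finset.mem_univ i))
  · apply max_le
    · exact Finset.sup_le fun i _ => Finset.le_sup
        (f := fun i => ((fromRows M₁ M₂) i j).natDegree) (Finset.mem_univ (Sum.inl i))
    · exact Finset.sup_le fun i _ => Finset.le_sup
        (f := fun i => ((fromRows M₁ M₂) i j).natDegree) (Finset.mem_univ (Sum.inr i))

lemma colDegNat_submatrix_le {a b : Type*} [Fintype a] [Fintype b] {l : ℕ}
    (N : Matrix (a ⊕ b) (Fin l) (Polynomial F)) (j : Fin l) :
    colDegNat (N.submatrix Sum.inr id) j ≤ colDegNat N j :=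
  Finset.sup_le fun i _ => Finset.le_sup (f := fun i => (N i j).natDegree)
    (Finset.mem_univ (Sum.inr i))


set_option synthInstance.maxHeartbeats 1000000 in
def liftφ {n m : ℕ} (Q : Matrix (Fin n) (Fin m) (RatFunc F)) :
    (Fin m → RatFunc F) →ₗ[RatFunc F] (Fin n ⊕ Fin m → RatFunc F) where
  toFun y := Sum.elim (Q.mulVec y) y
  map_add' x y := by funext i; cases i <;> simp [Matrix.mulVec_add]
  map_smul' c y := by
    funext i
    cases i with
    | inl i =>
      show (Q *ᵥ (c • y)) i = c • ((Q *ᵥ y) i)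
      rw [Matrix.mulVec_smul]
      rfl
    | inr i => rfl

lemma liftφ_ker {n m : ℕ} (Q : Matrix (Fin n) (Fin m) (RatFunc F)) :
    LinearMap.ker (liftφ Q) = ⊥ := by
  rw [LinearMap.ker_eq_bot']
  intro y hy
  funext i
  exact congrFun hy (Sum.inr i)

lemma mem_ker_fromBlocks {n p m : ℕ} (Ar : Matrix (Fin n) (Fin n) (RatFunc F))
    (Br : Matrix (Fin n) (Fin m) (RatFunc F)) (Cr : Matrix (Fin p) (Fin n) (RatFunc F))
    (Dr : Matrix (Fin p) (Fin m) (RatFunc F)) (hA : IsUnit Ar.det)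
    (v : Fin n ⊕ Fin m → RatFunc F) :
    (fromBlocks Ar Br (-Cr) Dr).mulVec v = 0 ↔
      (v ∘ Sum.inl = (-(Ar⁻¹ * Br)).mulVec (v ∘ Sum.inr) ∧
        (Dr + Cr * Ar⁻¹ * Br).mulVec (v ∘ Sum.inr) = 0) := by
  rw [fromBlocks_mulVec]
  set x := v ∘ Sum.inl with hxdef
  set y := v ∘ Sum.inr with hydef
  have hElim : ∀ (a : Fin n → RatFunc F) (b : Fin p → RatFunc F),
      Sum.elim a b = 0 ↔ a = 0 ∧ b = 0 := by
    intro a b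
    constructor
    · intro h
      exact ⟨funext fun i => congrFun h (Sum.inl i), funext fun i => congrFun h (Sum.inr i)⟩
    · rintro ⟨rfl, rfl⟩; funext i; cases i <;> rfl
  rw [hElim]
  constructor
  · rintro ⟨h1, h2⟩
    have hx : x = -((Ar⁻¹ * Br).mulVec y) := by
      have h3 := congrArg (Ar⁻¹.mulVec) h1
      rw [Matrix.mulVec_add, Matrix.mulVec_mulVec, Matrix.mulVec_mulVec,
        Matrix.nonsing_inv_mul _ hA, Matrix.one_mulVec, Matrix.mulVec_zero] at h3
      exact eq_neg_of_add_eq_zero_left h3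
    refine ⟨by rw [hx, Matrix.neg_mulVec], ?_⟩
    rw [hx, Matrix.neg_mulVec, Matrix.mulVec_neg, neg_neg, Matrix.mulVec_mulVec,
      ← Matrix.mul_assoc, add_comm] at h2
    rw [Matrix.add_mulVec]
    exact h2
  · rintro ⟨hx, hG0⟩
    constructor
    · rw [hx, Matrix.neg_mulVec, Matrix.mulVec_neg, Matrix.mulVec_mulVec,
        ← Matrix.mul_assoc, Matrix.mul_nonsing_inv _ hA, Matrix.one_mul]
      exact neg_add_cancel _
    · rw [hx, Matrix.neg_mulVec, Matrix.neg_mulVec, Matrix.mulVec_neg, neg_neg,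
        Matrix.mulVec_mulVec, ← Matrix.mul_assoc]
      rw [Matrix.add_mulVec] at hG0
      rw [add_comm]
      exact hG0

lemma ker_fromBlocks {n p m : ℕ} (Ar : Matrix (Fin n) (Fin n) (RatFunc F))
    (Br : Matrix (Fin n) (Fin m) (RatFunc F)) (Cr : Matrix (Fin p) (Fin n) (RatFunc F))
    (Dr : Matrix (Fin p) (Fin m) (RatFunc F)) (hA : IsUnit Ar.det) :
    LinearMap.ker (fromBlocks Ar Br (-Cr) Dr).mulVecLin =
      Submodule.map (liftφ (-(Ar⁻¹ * Br)))
        (LinearMap.ker (Dr + Cr * Ar⁻¹ * Br).mulVecLin) := by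
  ext v
  simp only [LinearMap.mem_ker, Matrix.mulVecLin_apply, Submodule.mem_map]
  rw [mem_ker_fromBlocks Ar Br Cr Dr hA]
  constructor
  · rintro ⟨h1, h2⟩
    refine ⟨v ∘ Sum.inr, h2, ?_⟩
    funext i
    cases i with
    | inl i => exact (congrFun h1 i).symm
    | inr i => rfl
  · rintro ⟨y, hy, rfl⟩
    exact ⟨rfl, hy⟩

lemma fromRows_basis_iff {n p m l : ℕ} (Ar : Matrix (Fin n) (Fin n) (RatFunc F))
    (Br : Matrix (Fin n) (Fin m) (RatFunc F)) (Cr : Matrix (Fin p) (Fin n) (RatFunc F))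
    (Dr : Matrix (Fin p) (Fin m) (RatFunc F)) (hA : IsUnit Ar.det)
    (M₁ : Matrix (Fin n) (Fin l) (Polynomial F)) (M₂ : Matrix (Fin m) (Fin l) (Polynomial F))
    (hM : toRF M₁ = -(Ar⁻¹ * Br) * toRF M₂) :
    IsRightPolyBasis (fromBlocks Ar Br (-Cr) Dr) (fromRows M₁ M₂) ↔
      IsRightPolyBasis (Dr + Cr * Ar⁻¹ * Br) M₂ := by
  have hinj : Function.Injective (liftφ (-(Ar⁻¹ * Br))) :=
    LinearMap.ker_eq_bot.mp (liftφ_ker _)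
  have hcols : (fun j : Fin l => (toRF (fromRows M₁ M₂))ᵀ j) =
      (liftφ (-(Ar⁻¹ * Br))) ∘ (fun j => (toRF M₂)ᵀ j) := by
    funext j
    funext i
    cases i with
    | inl i =>
      have h3 := congrFun (congrFun hM i) j
      simpa [toRF, Matrix.mul_apply, liftφ, Matrix.mulVec, dotProduct,
        Matrix.fromRows_apply_inl] using h3
    | inr i => rfl
  unfold IsRightPolyBasis
  rw [hcols, ker_fromBlocks Ar Br Cr Dr hA]
  apply and_congr
  · exact LinearMap.linearIndependent_iff (liftφ (-(Ar⁻¹ * Br))) (liftφ_ker _)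
  · rw [Set.range_comp, Submodule.span_image]
    exact (Submodule.map_injective_of_injective hinj).eq_iff

lemma submatrix_basis_of_basis {n p m l' : ℕ} (Ar : Matrix (Fin n) (Fin n) (RatFunc F))
    (Br : Matrix (Fin n) (Fin m) (RatFunc F)) (Cr : Matrix (Fin p) (Fin n) (RatFunc F))
    (Dr : Matrix (Fin p) (Fin m) (RatFunc F)) (hA : IsUnit Ar.det)
    (N : Matrix (Fin n ⊕ Fin m) (Fin l') (Polynomial F))
    (hN : IsRightPolyBasis (fromBlocks Ar Br (-Cr) Dr) N) :
    IsRightPolyBasis (Dr + Cr * Ar⁻¹ * Br) (N.submatrix Sum.inr id) := by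
  set Q := -(Ar⁻¹ * Br) with hQ
  set π : (Fin n ⊕ Fin m → RatFunc F) →ₗ[RatFunc F] (Fin m → RatFunc F) :=
    LinearMap.funLeft (RatFunc F) (RatFunc F) Sum.inr with hπ
  have hπφ : ∀ y, π (liftφ Q y) = y := fun y => rfl
  have hcols : (fun j : Fin l' => (toRF (N.submatrix Sum.inr id))ᵀ j) =
      π ∘ (fun j => (toRF N)ᵀ j) := rfl
  obtain ⟨hLI, hspan⟩ := hN
  rw [ker_fromBlocks Ar Br Cr Dr hA] at hspan
  constructor
  · rw [hcols]
    apply hLI.map (f := π)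
    rw [hspan]
    rw [Submodule.disjoint_def]
    intro x hx hker
    obtain ⟨y, hy, rfl⟩ := Submodule.mem_map.mp hx
    rw [LinearMap.mem_ker, hπφ] at hker
    rw [hker, map_zero]
  · rw [hcols, Set.range_comp, Submodule.span_image, hspan, ← Submodule.map_comp]
    have hid : π ∘ₗ liftφ Q = LinearMap.id := LinearMap.ext hπφ
    rw [hid, Submodule.map_id]


/-- Let `P = [[A,B],[-C,D]]` be a polynomial system matrix with transfer
function `G = D + C A⁻¹ B`.  If `A` and `C` are right coprime, `A⁻¹ B` is proper, `H₂` is a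
right minimal basis of `G` and `H₁ := -A⁻¹ B H₂`, then `[H₁;H₂]` is a right minimal basis of
`P`, and the right minimal indices of `P` and `G` coincide. -/
theorem rightMinimalBasis_psm_of_rightMinimalBasis_transfer
    {n p m l : ℕ}
    (A : Matrix (Fin n) (Fin n) (Polynomial F))
    (B : Matrix (Fin n) (Fin m) (Polynomial F))
    (C : Matrix (Fin p) (Fin n) (Polynomial F))
    (D : Matrix (Fin p) (Fin m) (Polynomial F))
    (hA : A.det ≠ 0)
    (hcoprime : ∃ (X : Matrix (Fin n) (Fin n) (Polynomial F))
        (Y : Matrix (Fin n) (Fin p) (Polynomial F)), X * A + Y * C = 1)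
    (hproper : ∀ i j, IsProperRat (((toRF A)⁻¹ * toRF B) i j))
    (G : Matrix (Fin p) (Fin m) (RatFunc F))
    (hG : G = toRF D + toRF C * (toRF A)⁻¹ * toRF B)
    (P : Matrix (Fin n ⊕ Fin p) (Fin n ⊕ Fin m) (RatFunc F))
    (hP : P = toRF (Matrix.fromBlocks A B (-C) D))
    (H₁ : Matrix (Fin n) (Fin l) (Polynomial F))
    (H₂ : Matrix (Fin m) (Fin l) (Polynomial F))
    (hH₂ : IsRightMinimalBasis G H₂)
    (hH₁ : toRF H₁ = -((toRF A)⁻¹ * toRF B * toRF H₂)) :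
    IsRightMinimalBasis P (Matrix.fromRows H₁ H₂) ∧
    (∀ s : Multiset ℕ, HasRightMinimalIndices P s ↔ HasRightMinimalIndices G s) := by

  have hP2 : P = fromBlocks (toRF A) (toRF B) (-(toRF C)) (toRF D) := by
    rw [hP, toRF_fromBlocks, toRF_neg]
  subst hP2
  subst hG
  have hAdet : IsUnit (toRF A).det := by
    have hdet : (toRF A).det = algebraMap (Polynomial F) (RatFunc F) A.det := by
      rw [RingHom.map_det, RingHom.mapMatrix_apply]
      rfl
    rw [isUnit_iff_ne_zero, hdet]
    intro hc
    exact hA (IsFractionRing.injective (Polynomial F) (RatFunc F) (by rw [hc, map_zero]))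
  have hQH : toRF H₁ = -((toRF A)⁻¹ * toRF B) * toRF H₂ := by
    rw [hH₁, Matrix.neg_mul]
  have hbasisH : IsRightPolyBasis (fromBlocks (toRF A) (toRF B) (-(toRF C)) (toRF D))
      (fromRows H₁ H₂) :=
    (fromRows_basis_iff (toRF A) (toRF B) (toRF C) (toRF D) hAdet H₁ H₂ hQH).mpr hH₂.1
  have hdegH : ∀ j, colDegNat H₁ j ≤ colDegNat H₂ j := fun j =>
    colDeg_le_of_proper ((toRF A)⁻¹ * toRF B) hproper H₁ H₂ hH₁ j
  have hcdH : ∀ j, colDegNat (fromRows H₁ H₂) j = colDegNat H₂ j := fun j => by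
    rw [colDegNat_fromRows, max_eq_right (hdegH j)]
  have hordH : matOrder (fromRows H₁ H₂) = matOrder H₂ :=
    Finset.sum_congr rfl fun j _ => hcdH j
  have hordsub : ∀ {l' : ℕ} (N' : Matrix (Fin n ⊕ Fin m) (Fin l') (Polynomial F)),
      matOrder (N'.submatrix Sum.inr id) ≤ matOrder N' := fun N' =>
    Finset.sum_le_sum fun j _ => colDegNat_submatrix_le N' j
  have hminP : IsRightMinimalBasis (fromBlocks (toRF A) (toRF B) (-(toRF C)) (toRF D))
      (fromRows H₁ H₂) := by
    refine ⟨hbasisH, ?_⟩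
    intro l' N' hN'
    have h2 := submatrix_basis_of_basis (toRF A) (toRF B) (toRF C) (toRF D) hAdet N' hN'
    calc matOrder (fromRows H₁ H₂) = matOrder H₂ := hordH
      _ ≤ matOrder (N'.submatrix Sum.inr id) := hH₂.2 _ _ h2
      _ ≤ matOrder N' := hordsub N'
  refine ⟨hminP, ?_⟩
  intro s
  constructor
  · rintro ⟨l', N, hN, rfl⟩
    have hbK := submatrix_basis_of_basis (toRF A) (toRF B) (toRF C) (toRF D) hAdet N hN.1
    have hordK_le : matOrder (N.submatrix Sum.inr id) ≤ matOrder N := hordsub N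
    have hN_le : matOrder N ≤ matOrder (fromRows H₁ H₂) := hN.2 _ _ hbasisH
    have hH₂_le : matOrder H₂ ≤ matOrder (N.submatrix Sum.inr id) := hH₂.2 _ _ hbK
    have hNK : matOrder N = matOrder (N.submatrix Sum.inr id) :=
      le_antisymm (hN_le.trans (hordH ▸ hH₂_le)) hordK_le
    have hpt : ∀ j ∈ Finset.univ, colDegNat (N.submatrix Sum.inr id) j = colDegNat N j :=
      (Finset.sum_eq_sum_iff_of_le (fun j _ => colDegNat_submatrix_le N j)).mp hNK.symm
    refine ⟨l', N.submatrix Sum.inr id, ⟨hbK, ?_⟩, ?_⟩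
    · intro l'' N'' h''
      have : matOrder (N.submatrix Sum.inr id) ≤ matOrder H₂ :=
        hordK_le.trans (hN_le.trans hordH.le)
      exact this.trans (hH₂.2 _ _ h'')
    · exact Multiset.map_congr rfl fun j hj => hpt j hj
  · rintro ⟨l'', N'', ⟨hb'', hm''⟩, rfl⟩
    obtain ⟨X, Y, hXY⟩ := hcoprime
    have hGN : (toRF D + toRF C * (toRF A)⁻¹ * toRF B) * toRF N'' = 0 := by
      ext i j
      have hcol : (toRF N'')ᵀ j ∈
          LinearMap.ker (toRF D + toRF C * (toRF A)⁻¹ * toRF B).mulVecLin := by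
        rw [← hb''.2]
        exact Submodule.subset_span ⟨j, rfl⟩
      have h5 : (toRF D + toRF C * (toRF A)⁻¹ * toRF B) *ᵥ ((toRF N'')ᵀ j) = 0 := by
        have h5' := LinearMap.mem_ker.mp hcol
        rwa [Matrix.mulVecLin_apply] at h5'
      have h9 := col_mul (toRF D + toRF C * (toRF A)⁻¹ * toRF B) (toRF N'') j
      rw [h5] at h9
      simpa using congrFun h9 i
    have hXYr : toRF X * toRF A + toRF Y * toRF C = 1 := by
      rw [← toRF_mul, ← toRF_mul, ← toRF_add, hXY, toRF_one]
    have h6 := congrArg (fun M => M * ((toRF A)⁻¹ * (toRF B * toRF N''))) hXYr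
    simp only [Matrix.add_mul, Matrix.one_mul] at h6
    rw [Matrix.mul_assoc (toRF X) (toRF A), ← Matrix.mul_assoc (toRF A) ((toRF A)⁻¹),
      Matrix.mul_nonsing_inv _ hAdet, Matrix.one_mul] at h6
    have h7 : toRF C * ((toRF A)⁻¹ * (toRF B * toRF N'')) =
        (toRF C * (toRF A)⁻¹ * toRF B) * toRF N'' := by
      rw [← Matrix.mul_assoc, ← Matrix.mul_assoc]
    have h8 : (toRF C * (toRF A)⁻¹ * toRF B) * toRF N'' = -(toRF D * toRF N'') := by
      rw [Matrix.add_mul] at hGN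
      exact eq_neg_of_add_eq_zero_right hGN
    rw [Matrix.mul_assoc (toRF Y) (toRF C), h7, h8] at h6
    have key : (toRF A)⁻¹ * (toRF B * toRF N'') =
        toRF X * (toRF B * toRF N'') - toRF Y * (toRF D * toRF N'') := by
      rw [← h6, Matrix.mul_neg, sub_eq_add_neg]
    have hM₁r : toRF ((Y * D - X * B) * N'') = -((toRF A)⁻¹ * toRF B) * toRF N'' := by
      rw [toRF_mul, toRF_sub, toRF_mul, toRF_mul, Matrix.sub_mul, Matrix.mul_assoc,
        Matrix.mul_assoc, Matrix.neg_mul, Matrix.mul_assoc, key, neg_sub]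
    have hbP : IsRightPolyBasis (fromBlocks (toRF A) (toRF B) (-(toRF C)) (toRF D))
        (fromRows ((Y * D - X * B) * N'') N'') :=
      (fromRows_basis_iff (toRF A) (toRF B) (toRF C) (toRF D) hAdet _ N'' hM₁r).mpr hb''
    have hdegM : ∀ j, colDegNat ((Y * D - X * B) * N'') j ≤ colDegNat N'' j := fun j =>
      colDeg_le_of_proper ((toRF A)⁻¹ * toRF B) hproper _ N'' (by rw [hM₁r, Matrix.neg_mul]) j
    have hcdM : ∀ j, colDegNat (fromRows ((Y * D - X * B) * N'') N'') j = colDegNat N'' j :=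
      fun j => by rw [colDegNat_fromRows, max_eq_right (hdegM j)]
    have hordM : matOrder (fromRows ((Y * D - X * B) * N'') N'') = matOrder N'' :=
      Finset.sum_congr rfl fun j _ => hcdM j
    have hordN''H : matOrder N'' = matOrder H₂ :=
      le_antisymm (hm'' _ _ hH₂.1) (hH₂.2 _ _ hb'')
    refine ⟨l'', fromRows ((Y * D - X * B) * N'') N'', ⟨hbP, ?_⟩, ?_⟩
    · intro l' N' hN'
      calc matOrder (fromRows ((Y * D - X * B) * N'') N'') = matOrder N'' := hordM
        _ = matOrder H₂ := hordN''H
        _ = matOrder (fromRows H₁ H₂) := hordH.symm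
        _ ≤ matOrder N' := hminP.2 _ _ hN'
    · exact Multiset.map_congr rfl fun j _ => hcdM j


end
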